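/- Fix M > 0 and let V(r) = (2M/r³)(1 − 2M/r). Then for all r > 2M the radial trapping term satisfies the identity 2V(r) + r_*(r)·(1 − 2M/r)·(dV/dr)(r) = (2M/r⁵)(1 − 2M/r)(2r² − r_*(r)(3r − 8M)), and there exists R > 0 such that this quantity is nonpositive for every r ∈ (2M, ∞) with |r_*(r)| ≥ R; in other words, the trapping term 2V + r_* (dV/dr_*) is positive only in a compact region of the tortoise coordinate. -/

import Mathlib

/-- Fix `M > 0` and let `V(r) = (2M/r³)(1 − 2M/r)`.  Then for all
`r > 2M` the radial trapping term satisfies the identity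
`2V(r) + r_*(r)·(1 − 2M/r)·(dV/dr)(r) = (2M/r⁵)(1 − 2M/r)(2r² − r_*(r)(3r − 8M))`,
and there exists `R > 0` such that this quantity is nonpositive for every
`r ∈ (2M, ∞)` with `|r_*(r)| ≥ R`; in other words, the trapping term
`2V + r_* (dV/dr_*)` is positive only in a compact region of the tortoise
coordinate. -/
theorem radial_trapping_term_compact_support (M : ℝ) (hM : 0 < M)
    (rstar : ℝ → ℝ)
    (hrstar : ∀ r : ℝ, rstar r =
      r + 2 * M * Real.log ((r - 2 * M) / (2 * M)) - 3 * M + 2 * M * Real.log 2)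
    (V : ℝ → ℝ) (hV : ∀ r : ℝ, V r = (2 * M / r ^ 3) * (1 - 2 * M / r)) :
    (∀ r : ℝ, 2 * M < r →
      2 * V r + rstar r * ((1 - 2 * M / r) * deriv V r)
        = (2 * M / r ^ 5) * (1 - 2 * M / r) * (2 * r ^ 2 - rstar r * (3 * r - 8 * M))) ∧
    (∃ R : ℝ, 0 < R ∧ ∀ r : ℝ, 2 * M < r → R ≤ |rstar r| →
      2 * V r + rstar r * ((1 - 2 * M / r) * deriv V r) ≤ 0) := by
  have hVfun : V = fun x : ℝ => 2*M / x^3 - 4*M^2 / x^4 := by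
    funext x; rw [hV]
    rcases eq_or_ne x 0 with h|h
    · simp [h]
    · field_simp; ring
  have hderiv : ∀ r : ℝ, 2*M < r → deriv V r = -6*M/r^4 + 16*M^2/r^5 := by
    intro r hr
    have hr0 : r ≠ 0 := by
      have : 0 < r := lt_trans (by positivity) hr
      exact this.ne'
    have hp3 : HasDerivAt (fun x : ℝ => x^3) (3*r^2) r := by
      simpa using hasDerivAt_pow 3 r
    have hp4 : HasDerivAt (fun x : ℝ => x^4) (4*r^3) r := by
      simpa using hasDerivAt_pow 4 r
    have h3 : HasDerivAt (fun x : ℝ => 2*M / x^3)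
        (2*M * (-(3*r^2) / (r^3)^2)) r := by
      simpa [div_eq_mul_inv] using ((hp3.inv (pow_ne_zero 3 hr0)).const_mul (2*M))
    have h4 : HasDerivAt (fun x : ℝ => 4*M^2 / x^4)
        (4*M^2 * (-(4*r^3) / (r^4)^2)) r := by
      simpa [div_eq_mul_inv] using ((hp4.inv (pow_ne_zero 4 hr0)).const_mul (4*M^2))
    have h5 := (h3.sub h4)
    rw [hVfun]
    rw [show (fun x : ℝ => 2*M / x^3 - 4*M^2 / x^4) = (fun x : ℝ => 2*M / x^3) - (fun x : ℝ => 4*M^2 / x^4) from rfl, h5.deriv]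
    field_simp
    ring
  have key : ∀ r : ℝ, 2 * M < r →
      2 * V r + rstar r * ((1 - 2 * M / r) * deriv V r)
        = (2 * M / r ^ 5) * (1 - 2 * M / r) * (2 * r ^ 2 - rstar r * (3 * r - 8 * M)) := by
    intro r hr
    have hr0 : r ≠ 0 := (lt_trans (by positivity) hr).ne'
    rw [hderiv r hr, hV r]
    field_simp
    ring
  refine ⟨key, ⟨31 * M, by positivity, ?_⟩⟩
  intro r hr habs
  have hrpos : 0 < r := lt_trans (by positivity) hr
  have hxpos : 0 < (r - 2*M) / (2*M) := by
    apply div_pos (by linarith) (by positivity)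
  have hfrac : 2 * M / r < 1 := (div_lt_one hrpos).mpr hr
  have hpre : 0 ≤ (2 * M / r ^ 5) * (1 - 2 * M / r) := by
    have : 0 ≤ 2 * M / r ^ 5 := by positivity
    nlinarith
  rw [key r hr]
  have hfac : 2 * r ^ 2 - rstar r * (3 * r - 8 * M) ≤ 0 := by
    rcases le_abs'.mp habs with hneg | hposb
    · -- rstar r ≤ -(31*M)
      have hlog : Real.log ((r - 2*M)/(2*M)) ≤ -15 := by
        have h2 : 0 < Real.log 2 := Real.log_pos (by norm_num)
        have := hrstar r
        nlinarith [hneg, this]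
      have hx : (r - 2*M)/(2*M) ≤ Real.exp (-15) := by
        exact (Real.log_le_iff_le_exp hxpos).mp hlog
      have hexp : Real.exp (-15 : ℝ) ≤ 1/16 := by
        rw [Real.exp_neg]
        rw [inv_le_comm₀ (Real.exp_pos _) (by norm_num)]
        calc (1/16 : ℝ)⁻¹ = 16 := by norm_num
        _ ≤ Real.exp 15 := by nlinarith [Real.add_one_le_exp (15 : ℝ)]
      have hrsmall : r ≤ 2*M + M/8 := by
        have : (r - 2*M)/(2*M) ≤ 1/16 := hx.trans hexp
        rw [div_le_iff₀ (by positivity)] at this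
        linarith
      nlinarith [hneg, hrsmall, hM, hr]
    · -- 31*M ≤ rstar r
      have hrbig : 18 * M ≤ r := by
        have hlog : Real.log ((r - 2*M)/(2*M)) ≤ (r - 2*M)/(2*M) - 1 :=
          Real.log_le_sub_one_of_pos hxpos
        have hlog2 : Real.log 2 ≤ 1 := by
          nlinarith [Real.log_le_sub_one_of_pos (by norm_num : (0:ℝ) < 2)]
        have hx' : 2 * M * Real.log ((r - 2*M)/(2*M)) ≤ r - 4*M := by
          have := mul_le_mul_of_nonneg_left hlog (by positivity : (0:ℝ) ≤ 2*M)
          have heq : 2*M * ((r - 2*M)/(2*M) - 1) = r - 4*M := by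
            field_simp; ring
          linarith [heq ▸ this]
        have := hrstar r
        nlinarith
      have hge4 : (1:ℝ) ≤ (r - 2*M)/(2*M) := by
        rw [le_div_iff₀ (by positivity)]
        nlinarith
      have hlogpos : 0 ≤ Real.log ((r - 2*M)/(2*M)) :=
        Real.log_nonneg hge4
      have hlog2 : 0 ≤ Real.log 2 := Real.log_nonneg (by norm_num)
      have hs : r - 3*M ≤ rstar r := by
        rw [hrstar r]; nlinarith
      nlinarith [hrbig, hs, hM]
  exact mul_nonpos_of_nonneg_of_nonpos hpre hfac
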